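/- Let S = K[x_1,...,x_4] and I = ((x_1x_2)^{w_1}, x_2x_3, (x_3x_4)^{w_3}) with w_1 ≥ w_3 ≥ 2. Then for any t ≥ 1, (I^t + (x_2x_3)) = ((x_1x_2)^{t w_1}, x_2x_3, (x_3x_4)^{t w_3}). -/

import Mathlib

open MvPolynomial

/-- for `I = ((x_1x_2)^{w_1}, x_2x_3, (x_3x_4)^{w_3})` with
`w_1 ≥ w_3 ≥ 2`, for all `t ≥ 1`:
`I^t + (x_2x_3) = ((x_1x_2)^{t w_1}, x_2x_3, (x_3x_4)^{t w_3})`. -/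
theorem path4_power_sup (K : Type) [Field K] (w1 w3 : ℕ)
    (hw3 : 2 ≤ w3) (h13 : w3 ≤ w1) (t : ℕ) (ht : 1 ≤ t)
    (I : Ideal (MvPolynomial (Fin 4) K))
    (hI : I = Ideal.span {(X 0 * X 1) ^ w1, X 1 * X 2, (X 2 * X 3) ^ w3}) :
    (I ^ t) ⊔ Ideal.span {X 1 * X 2} =
      Ideal.span {(X 0 * X 1) ^ (t * w1), X 1 * X 2, (X 2 * X 3) ^ (t * w3)} := by
  subst hI
  set a := (X 0 * X 1 : MvPolynomial (Fin 4) K) with ha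
  set b := (X 1 * X 2 : MvPolynomial (Fin 4) K) with hb
  set c := (X 2 * X 3 : MvPolynomial (Fin 4) K) with hc
  have h1 : 1 ≤ w1 := le_trans (by omega) h13
  have h3 : 1 ≤ w3 := by omega
  induction t, ht using Nat.le_induction with
  | base =>
    rw [pow_one, one_mul, one_mul]
    exact sup_eq_left.mpr (Ideal.span_mono (by simp))
  | succ t ht ih =>
    have hX1a : ∀ m : ℕ, 1 ≤ m → (X 1 : MvPolynomial (Fin 4) K) ∣ a ^ m := by
      intro m hm
      exact dvd_pow (dvd_mul_left _ _) (by omega)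
    have hX2c : ∀ m : ℕ, 1 ≤ m → (X 2 : MvPolynomial (Fin 4) K) ∣ c ^ m := by
      intro m hm
      exact dvd_pow (dvd_mul_right _ _) (by omega)
    have hmemb : ∀ x : MvPolynomial (Fin 4) K, b ∣ x →
        x ∈ Ideal.span {a ^ ((t + 1) * w1), b, c ^ ((t + 1) * w3)} := by
      rintro x ⟨q, rfl⟩
      exact Ideal.mul_mem_right _ _ (Ideal.subset_span (by simp))
    rw [pow_succ']
    have step : Ideal.span {a ^ w1, b, c ^ w3} * Ideal.span {a ^ w1, b, c ^ w3} ^ t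
          ⊔ Ideal.span {b}
        = Ideal.span {a ^ w1, b, c ^ w3} *
            (Ideal.span {a ^ w1, b, c ^ w3} ^ t ⊔ Ideal.span {b})
          ⊔ Ideal.span {b} := by
      rw [Ideal.mul_sup, sup_assoc, sup_eq_right.mpr (Ideal.mul_le_inf.trans inf_le_right :
        Ideal.span {a ^ w1, b, c ^ w3} * Ideal.span {b} ≤ Ideal.span {b})]
    rw [step, ih, Ideal.span_mul_span']
    apply le_antisymm
    · apply sup_le
      · rw [Ideal.span_le]
        rintro x hx
        rw [Set.mem_mul] at hx
        obtain ⟨p, hp, q, hq, rfl⟩ := hx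
        simp only [Set.mem_insert_iff, Set.mem_singleton_iff] at hp hq
        rcases hp with rfl | rfl | rfl <;> rcases hq with rfl | rfl | rfl
        · rw [show (t + 1) * w1 = w1 + t * w1 by ring, pow_add]
          exact Ideal.subset_span (by simp)
        · exact hmemb _ (Dvd.intro_left _ rfl)
        · exact hmemb _ (mul_dvd_mul (hX1a _ h1) (hX2c _ (by nlinarith)))
        · exact hmemb _ (Dvd.intro _ rfl)
        · exact hmemb _ (Dvd.intro _ rfl)
        · exact hmemb _ (Dvd.intro _ rfl)
        · rw [mul_comm (c ^ w3) (a ^ (t * w1))]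
          exact hmemb _ (mul_dvd_mul (hX1a _ (by nlinarith)) (hX2c _ h3))
        · exact hmemb _ (Dvd.intro_left _ rfl)
        · rw [show (t + 1) * w3 = w3 + t * w3 by ring, pow_add]
          exact Ideal.subset_span (by simp)
      · exact Ideal.span_mono (by simp)
    · rw [Ideal.span_le]
      rintro x hx
      simp only [Set.mem_insert_iff, Set.mem_singleton_iff] at hx
      rcases hx with rfl | rfl | rfl
      · refine le_sup_left (α := Ideal (MvPolynomial (Fin 4) K)) ?_
        apply Ideal.subset_span
        rw [show (t + 1) * w1 = w1 + t * w1 by ring, pow_add]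
        exact Set.mul_mem_mul (by simp) (by simp)
      · exact le_sup_right (α := Ideal (MvPolynomial (Fin 4) K))
          (Ideal.subset_span rfl)
      · refine le_sup_left (α := Ideal (MvPolynomial (Fin 4) K)) ?_
        apply Ideal.subset_span
        rw [show (t + 1) * w3 = w3 + t * w3 by ring, pow_add]
        exact Set.mul_mem_mul (by simp) (by simp)
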